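/- arXiv:1203.3663 — 4 statements merged into one kernel-verified Lean document; each statement's English description precedes it below -/
import Mathlib

section
/- Let (Ω, F, μ) be a probability space with Ω a standard Borel space. Let X : Ω → ℝ^p be measurable, let ε : Ω → E be measurable into a measurable space E with ε independent of X, let h : ℝ^p → ℝ^d be measurable, and define Y := φ(h(X), ε) for a measurable φ : ℝ^d × E → ℝ. Then Y and X are conditionally independent given W := h ∘ X. -/
open MeasureTheory ProbabilityTheory

/-- The structural principle underlying the dimension-reduction model (1) of the paper:
if `Y = φ(h(X), ε)` with `ε` independent of `X`, then `Y` and `X` are conditionally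
independent given `W = h ∘ X`. -/
theorem condIndep_of_noise {Ω E : Type*} {mΩ : MeasurableSpace Ω} [StandardBorelSpace Ω]
    [MeasurableSpace E] {μ : Measure Ω} [IsProbabilityMeasure μ] {p d : ℕ}
    (X : Ω → (Fin p → ℝ)) (hX : Measurable X)
    (ε : Ω → E) (hε : Measurable ε)
    (hindep : IndepFun ε X μ)
    (h : (Fin p → ℝ) → (Fin d → ℝ)) (hh : Measurable h)
    (φ : (Fin d → ℝ) × E → ℝ) (hφ : Measurable φ)
    (Y : Ω → ℝ) (hY : Y = fun ω => φ (h (X ω), ε ω))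
    (hW : Measurable (fun ω => h (X ω))) :
    CondIndepFun (MeasurableSpace.comap (fun ω => h (X ω)) inferInstance)
      hW.comap_le Y X μ := by
  subst hY
  set W : Ω → (Fin d → ℝ) := fun ω => h (X ω) with hWdef
  have hmW : MeasurableSpace.comap W inferInstance ≤ mΩ := hW.comap_le
  have hmX : MeasurableSpace.comap X inferInstance ≤ mΩ := hX.comap_le
  have hWX : MeasurableSpace.comap W inferInstance
      ≤ MeasurableSpace.comap X inferInstance := by
    rw [hWdef]
    have heq : (fun ω => h (X ω)) = h ∘ X := rfl
    rw [heq, ← MeasurableSpace.comap_comp]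
    exact MeasurableSpace.comap_mono hh.comap_le
  rw [condIndepFun_iff_condIndep]
  set Z : Ω → (Fin d → ℝ) × E := fun ω => (W ω, ε ω) with hZdef
  have hZ : Measurable Z := hW.prodMk hε
  have hle : MeasurableSpace.comap (fun ω => φ (h (X ω), ε ω)) inferInstance
      ≤ MeasurableSpace.comap Z inferInstance := by
    have heq : (fun ω => φ (h (X ω), ε ω)) = φ ∘ Z := rfl
    rw [heq, ← MeasurableSpace.comap_comp]
    exact MeasurableSpace.comap_mono hφ.comap_le
  refine condIndep_of_condIndep_of_le_left ?_ hle
  -- independence of σ(ε) and σ(X)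
  have hindepεX : ProbabilityTheory.Indep (MeasurableSpace.comap ε inferInstance)
      (MeasurableSpace.comap X inferInstance) μ :=
    (IndepFun_iff_Indep ε X μ).mp hindep
  -- generate the σ-algebra of Z by rectangles
  have hgenZ : MeasurableSpace.comap Z inferInstance
      = MeasurableSpace.generateFrom
        ((Set.preimage Z) '' (Set.image2 (· ×ˢ ·)
          { s : Set (Fin d → ℝ) | MeasurableSet s } { t : Set E | MeasurableSet t })) := by
    conv_lhs => rw [← generateFrom_prod]
    rw [MeasurableSpace.comap_generateFrom]
  have hgenX : MeasurableSpace.comap X inferInstance = MeasurableSpace.generateFrom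
      ((Set.preimage X) '' { s : Set (Fin p → ℝ) | MeasurableSet s }) := by
    conv_lhs => rw [← @MeasurableSpace.generateFrom_measurableSet (Fin p → ℝ) _]
    rw [MeasurableSpace.comap_generateFrom]
  refine CondIndepSets.condIndep hZ.comap_le hmX
    (isPiSystem_prod.comap Z) (IsPiSystem.comap MeasurableSpace.isPiSystem_measurableSet X) hgenZ hgenX ?_
  have hp1m : ∀ s ∈ (Set.preimage Z) '' (Set.image2 (· ×ˢ ·)
      { s : Set (Fin d → ℝ) | MeasurableSet s } { t : Set E | MeasurableSet t }),
      MeasurableSet s := by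
    rintro s ⟨s', ⟨C, hC, D, hD, rfl⟩, rfl⟩
    simp only [Set.mem_setOf_eq] at hC hD
    exact hZ (hC.prod hD)
  have hp2m : ∀ s ∈ (Set.preimage X) '' { s : Set (Fin p → ℝ) | MeasurableSet s },
      MeasurableSet s := by
    rintro s ⟨B, hB, rfl⟩
    simp only [Set.mem_setOf_eq] at hB
    exact hX hB
  refine (condIndepSets_iff _ _ _ _ hp1m hp2m μ).mpr ?_
  rintro t1 t2 ⟨s', ⟨C, hC, D, hD, rfl⟩, rfl⟩ ⟨B, hB, rfl⟩
  simp only [Set.mem_setOf_eq] at hC hD hB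
  have ht1 : Z ⁻¹' (C ×ˢ D) = W ⁻¹' C ∩ ε ⁻¹' D := Set.mk_preimage_prod W ε
  rw [ht1]
  -- the common constant
  set c : ℝ := ∫ ω, (ε ⁻¹' D).indicator (fun _ => (1 : ℝ)) ω ∂μ with hc
  have hεD : MeasurableSet (ε ⁻¹' D) := hε hD
  have hXB : MeasurableSet (X ⁻¹' B) := hX hB
  have hXBmX : MeasurableSet[MeasurableSpace.comap X inferInstance] (X ⁻¹' B) := ⟨B, hB, rfl⟩
  have hWCmW : MeasurableSet[MeasurableSpace.comap W inferInstance] (W ⁻¹' C) := ⟨C, hC, rfl⟩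
  have hint : ∀ s : Set Ω, MeasurableSet s →
      Integrable (s.indicator (fun _ => (1 : ℝ))) μ :=
    fun s hs => (integrable_const (1 : ℝ)).indicator hs
  have hsmεD : StronglyMeasurable[MeasurableSpace.comap ε inferInstance]
      ((ε ⁻¹' D).indicator (fun _ => (1 : ℝ))) :=
    stronglyMeasurable_const.indicator ⟨D, hD, rfl⟩
  -- conditional expectation of 1_{ε⁻¹D} given σ(X) is the constant c
  have hc1 : μ[(ε ⁻¹' D).indicator (fun _ => (1 : ℝ)) |
      MeasurableSpace.comap X inferInstance] =ᵐ[μ] fun _ => c :=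
    condExp_indep_eq hε.comap_le hmX hsmεD hindepεX
  -- conditional expectation of 1_{ε⁻¹D} given σ(W) is also c
  have hc2 : μ[(ε ⁻¹' D).indicator (fun _ => (1 : ℝ)) |
      MeasurableSpace.comap W inferInstance] =ᵐ[μ] fun _ => c :=
    condExp_indep_eq hε.comap_le hmW hsmεD
      (indep_of_indep_of_le_right hindepεX hWX)
  -- Claim A : μ⟦ε⁻¹D ∩ X⁻¹B | σ(W)⟧ = c • μ⟦X⁻¹B | σ(W)⟧ a.e.
  have hA : (μ⟦(ε ⁻¹' D) ∩ (X ⁻¹' B) | MeasurableSpace.comap W inferInstance⟧)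
      =ᵐ[μ] c • (μ⟦X ⁻¹' B | MeasurableSpace.comap W inferInstance⟧) := by
    have hstep1 : μ[((ε ⁻¹' D) ∩ (X ⁻¹' B)).indicator (fun _ => (1 : ℝ)) |
        MeasurableSpace.comap X inferInstance]
        =ᵐ[μ] (X ⁻¹' B).indicator (fun _ => c) := by
      have heq : ((ε ⁻¹' D) ∩ (X ⁻¹' B)).indicator (fun _ => (1 : ℝ))
          = (X ⁻¹' B).indicator ((ε ⁻¹' D).indicator (fun _ => (1 : ℝ))) := by
        rw [Set.indicator_indicator, Set.inter_comm]
      rw [heq]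
      refine (condExp_indicator (hint _ hεD) hXBmX).trans ?_
      filter_upwards [hc1] with ω hω
      by_cases hmem : ω ∈ X ⁻¹' B <;>
        simp [Set.indicator_apply, hmem, hω]
    calc (μ⟦(ε ⁻¹' D) ∩ (X ⁻¹' B) | MeasurableSpace.comap W inferInstance⟧)
        =ᵐ[μ] μ[μ[((ε ⁻¹' D) ∩ (X ⁻¹' B)).indicator (fun _ => (1 : ℝ)) |
            MeasurableSpace.comap X inferInstance] | MeasurableSpace.comap W inferInstance] :=
          (condExp_condExp_of_le hWX hmX).symm
      _ =ᵐ[μ] μ[(X ⁻¹' B).indicator (fun _ => c) |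
            MeasurableSpace.comap W inferInstance] := condExp_congr_ae hstep1
      _ =ᵐ[μ] μ[c • (X ⁻¹' B).indicator (fun _ => (1 : ℝ)) |
            MeasurableSpace.comap W inferInstance] := by
          refine condExp_congr_ae (Filter.EventuallyEq.of_eq ?_)
          funext ω
          by_cases hmem : ω ∈ X ⁻¹' B <;> simp [Set.indicator_apply, hmem]
      _ =ᵐ[μ] c • (μ⟦X ⁻¹' B | MeasurableSpace.comap W inferInstance⟧) := condExp_smul c _ _
  -- final computation
  have hLHS : (μ⟦(W ⁻¹' C ∩ ε ⁻¹' D) ∩ X ⁻¹' B | MeasurableSpace.comap W inferInstance⟧)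
      =ᵐ[μ] (W ⁻¹' C).indicator (c • (μ⟦X ⁻¹' B | MeasurableSpace.comap W inferInstance⟧)) := by
    have heq : ((W ⁻¹' C ∩ ε ⁻¹' D) ∩ X ⁻¹' B).indicator (fun _ => (1 : ℝ))
        = (W ⁻¹' C).indicator (((ε ⁻¹' D) ∩ (X ⁻¹' B)).indicator (fun _ => (1 : ℝ))) := by
      rw [Set.indicator_indicator, Set.inter_assoc]
    rw [heq]
    refine (condExp_indicator (hint _ (hεD.inter hXB)) hWCmW).trans ?_
    filter_upwards [hA] with ω hω
    by_cases hmem : ω ∈ W ⁻¹' C <;> simp [Set.indicator_apply, hmem, hω]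
  have hRHS : (μ⟦W ⁻¹' C ∩ ε ⁻¹' D | MeasurableSpace.comap W inferInstance⟧)
      =ᵐ[μ] (W ⁻¹' C).indicator (fun _ => c) := by
    have heq : (W ⁻¹' C ∩ ε ⁻¹' D).indicator (fun _ => (1 : ℝ))
        = (W ⁻¹' C).indicator ((ε ⁻¹' D).indicator (fun _ => (1 : ℝ))) := by
      rw [Set.indicator_indicator]
    rw [heq]
    refine (condExp_indicator (hint _ hεD) hWCmW).trans ?_
    filter_upwards [hc2] with ω hω
    by_cases hmem : ω ∈ W ⁻¹' C <;> simp [Set.indicator_apply, hmem, hω]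
  filter_upwards [hLHS, hRHS] with ω h1 h2
  rw [h1, Pi.mul_apply, h2]
  by_cases hmem : ω ∈ W ⁻¹' C <;> simp [Set.indicator_apply, hmem, mul_comm] <;> exact Or.inl rfl
end

section
/- Let (Ω, F, μ) be a probability space with Ω a standard Borel space, and let Y : Ω → ℝ, C : Ω → ℝ, X : Ω → ℝ^p, and W : Ω → ℝ^d be measurable with W = h ∘ X for a measurable h. Assume (i) Y and X are conditionally independent given W, and (ii) C is independent of the pair (Y, X). Then the pair (Y, C) and X are conditionally independent given W. -/
open MeasureTheory ProbabilityTheory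

/-- If `B` is independent of `D ∩ G` for all `m`-measurable `G`, then
`μ⟦B ∩ D | m⟧ = μ B • μ⟦D | m⟧` a.e. -/
lemma condexp_indicator_inter_of_indep' {Ω : Type*} {m mΩ : MeasurableSpace Ω}
    {μ : Measure Ω} [IsProbabilityMeasure μ] (hm : m ≤ mΩ)
    {B D : Set Ω} (hB : MeasurableSet B) (hD : MeasurableSet D)
    (hind : ∀ G, MeasurableSet[m] G → μ (B ∩ (D ∩ G)) = μ B * μ (D ∩ G)) :
    μ⟦B ∩ D | m⟧ =ᵐ[μ] fun ω => (μ B).toReal * (μ⟦D | m⟧) ω := by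
  haveI hSF : SigmaFinite (μ.trim hm) := inferInstance
  refine (ae_eq_condExp_of_forall_setIntegral_eq hm ?_ ?_ ?_ ?_).symm
  · exact (integrable_const (1 : ℝ)).indicator (hB.inter hD)
  · intro s _ _
    exact (integrable_condExp.const_mul _).integrableOn
  · intro G hG _
    have h1 : ∫ x in G, (μ B).toReal * (μ⟦D | m⟧) x ∂μ
        = (μ B).toReal * ∫ x in G, (μ⟦D | m⟧) x ∂μ := by
      rw [integral_const_mul]
    have h2 : ∫ x in G, (μ⟦D | m⟧) x ∂μ
        = ∫ x in G, D.indicator (fun _ => (1 : ℝ)) x ∂μ :=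
      setIntegral_condExp hm ((integrable_const (1 : ℝ)).indicator hD) hG
    have h3 : ∫ x in G, D.indicator (fun _ => (1 : ℝ)) x ∂μ = (μ (G ∩ D)).toReal := by
      rw [setIntegral_indicator hD, setIntegral_const, smul_eq_mul, mul_one]; rfl
    have h4 : ∫ x in G, (B ∩ D).indicator (fun _ => (1 : ℝ)) x ∂μ
        = (μ (G ∩ (B ∩ D))).toReal := by
      rw [setIntegral_indicator (hB.inter hD), setIntegral_const, smul_eq_mul, mul_one]; rfl
    have h5 : G ∩ (B ∩ D) = B ∩ (D ∩ G) := by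
      ext ω; simp; tauto
    have h6 : G ∩ D = D ∩ G := Set.inter_comm _ _
    rw [h1, h2, h3, h4, h5, h6, hind G hG, ENNReal.toReal_mul]
  · exact (stronglyMeasurable_condExp.aestronglyMeasurable).const_smul ((μ B).toReal)

/-- Key claim of Section 3 of the paper: under totally independent censorship `C ⫫ (Y, X)`,
if `Y ⫫ X | W` with `W = h ∘ X`, then `(Y, C) ⫫ X | W`. -/
theorem condIndepFun_pair_censoring {Ω : Type*} {mΩ : MeasurableSpace Ω}
    [StandardBorelSpace Ω] {μ : Measure Ω} [IsProbabilityMeasure μ] {p d : ℕ}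
    (Y : Ω → ℝ) (hY : Measurable Y)
    (C : Ω → ℝ) (hC : Measurable C)
    (X : Ω → (Fin p → ℝ)) (hX : Measurable X)
    (h : (Fin p → ℝ) → (Fin d → ℝ)) (hh : Measurable h)
    (W : Ω → (Fin d → ℝ)) (hWdef : W = fun ω => h (X ω)) (hW : Measurable W)
    (hYX : CondIndepFun (MeasurableSpace.comap W inferInstance) hW.comap_le Y X μ)
    (hcens : IndepFun C (fun ω => (Y ω, X ω)) μ) :
    CondIndepFun (MeasurableSpace.comap W inferInstance) hW.comap_le
      (fun ω => (Y ω, C ω)) X μ := by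
  -- key independence fact from total independence of censoring
  have key : ∀ (t : Set ℝ) (E : Set (ℝ × (Fin p → ℝ))), MeasurableSet t → MeasurableSet E →
      ∀ G, MeasurableSet[MeasurableSpace.comap W inferInstance] G →
      μ (C ⁻¹' t ∩ ((fun ω => (Y ω, X ω)) ⁻¹' E ∩ G))
        = μ (C ⁻¹' t) * μ ((fun ω => (Y ω, X ω)) ⁻¹' E ∩ G) := by
    intro t E ht hE G hG
    obtain ⟨v, hv, rfl⟩ := hG
    have hWX : W ⁻¹' v = (fun ω => (Y ω, X ω)) ⁻¹' (Set.univ ×ˢ (h ⁻¹' v)) := by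
      ext ω
      simp [hWdef]
    rw [hWX, ← Set.preimage_inter]
    exact hcens.measure_inter_preimage_eq_mul t _ ht (hE.inter (MeasurableSet.univ.prod (hh hv)))
  -- the conditional independence condexp identity from hYX
  have hYXc := (condIndepFun_iff_condExp_inter_preimage_eq_mul hY hX).mp hYX
  rw [condIndepFun_iff_condIndep]
  refine CondIndepSets.condIndep (hY.prodMk hC).comap_le hX.comap_le ?_ ?_ ?_ ?_ ?_
    (p1 := Set.preimage (fun ω => (Y ω, C ω)) '' (Set.image2 (· ×ˢ ·)
      { s : Set ℝ | MeasurableSet s } { t : Set ℝ | MeasurableSet t }))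
    (p2 := {s : Set Ω | MeasurableSet[MeasurableSpace.comap X inferInstance] s})
  · exact isPiSystem_prod.comap _
  · exact @MeasurableSpace.isPiSystem_measurableSet Ω (MeasurableSpace.comap X inferInstance)
  · conv_lhs => rw [← generateFrom_prod]
    rw [MeasurableSpace.comap_generateFrom]
  · exact (@MeasurableSpace.generateFrom_measurableSet Ω
      (MeasurableSpace.comap X inferInstance)).symm
  · rw [condIndepSets_iff]
    rotate_left
    · rintro s ⟨u, hu, rfl⟩
      obtain ⟨a, (ha : MeasurableSet a), b, (hb : MeasurableSet b), rfl⟩ := hu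
      exact (hY.prodMk hC) (ha.prod hb)
    · rintro s hs
      exact hX.comap_le _ hs
    rintro t1 t2 ⟨u, hu, rfl⟩ ⟨uX, huX, rfl⟩
    obtain ⟨s, (hs : MeasurableSet s), t, (ht : MeasurableSet t), rfl⟩ := hu
    have ht1 : (fun ω => (Y ω, C ω)) ⁻¹' (s ×ˢ t) = Y ⁻¹' s ∩ C ⁻¹' t := rfl
    have hAS : Y ⁻¹' s ∩ X ⁻¹' uX = (fun ω => (Y ω, X ω)) ⁻¹' (s ×ˢ uX) := rfl
    have hA : Y ⁻¹' s = (fun ω => (Y ω, X ω)) ⁻¹' (s ×ˢ Set.univ) := by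
      ext ω; simp
    have hL1 : μ⟦C ⁻¹' t ∩ (Y ⁻¹' s ∩ X ⁻¹' uX) | MeasurableSpace.comap W inferInstance⟧
        =ᵐ[μ] fun ω => (μ (C ⁻¹' t)).toReal *
          (μ⟦Y ⁻¹' s ∩ X ⁻¹' uX | MeasurableSpace.comap W inferInstance⟧) ω := by
      refine condexp_indicator_inter_of_indep' hW.comap_le (hC ht)
        ((hY hs).inter (hX huX)) ?_
      intro G hG
      rw [hAS]
      exact key t (s ×ˢ uX) ht (hs.prod huX) G hG
    have hL2 : μ⟦C ⁻¹' t ∩ Y ⁻¹' s | MeasurableSpace.comap W inferInstance⟧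
        =ᵐ[μ] fun ω => (μ (C ⁻¹' t)).toReal *
          (μ⟦Y ⁻¹' s | MeasurableSpace.comap W inferInstance⟧) ω := by
      refine condexp_indicator_inter_of_indep' hW.comap_le (hC ht) (hY hs) ?_
      intro G hG
      rw [hA]
      exact key t (s ×ˢ Set.univ) ht (hs.prod MeasurableSet.univ) G hG
    have hYXsu := hYXc s uX hs huX
    have hset1 : (fun ω => (Y ω, C ω)) ⁻¹' (s ×ˢ t) ∩ X ⁻¹' uX
        = C ⁻¹' t ∩ (Y ⁻¹' s ∩ X ⁻¹' uX) := by
      rw [ht1]; ext ω; simp; tauto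
    have hset2 : (fun ω => (Y ω, C ω)) ⁻¹' (s ×ˢ t) = C ⁻¹' t ∩ Y ⁻¹' s := by
      rw [ht1, Set.inter_comm]
    rw [hset1, hset2]
    filter_upwards [hL1, hL2, hYXsu] with ω h1 h2 h3
    simp only [Pi.mul_apply] at *
    rw [h1, h2, h3]
    ring
end

section
/- Let (Ω, F, μ) be a probability space, let U be an integrable real random variable, let Y, C : Ω → ℝ be measurable, and suppose C is independent of the pair (Y, U). Fix t ∈ ℝ and set Y* := min(Y, C). Then E[U · 1{Y* > t}] · μ(Y > t) = E[U · 1{Y > t}] · μ(Y* > t). Consequently, if μ(Y > t) > 0 and μ(C > t) > 0, then E[U · 1{Y* > t}] / μ(Y* > t) = E[U · 1{Y > t}] / μ(Y > t). -/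
open MeasureTheory ProbabilityTheory

/-- The identity showing that the moment estimators `μ̂*_{t0}`, `Σ̂*_{t0}` of Section 3 of the
paper target the uncensored slice moments: with `Y* = min(Y, C)` and `C ⫫ (Y, U)`,
`E[U·1{Y* > t}]·μ(Y > t) = E[U·1{Y > t}]·μ(Y* > t)`, and hence the two slice means agree. -/
theorem censored_slice_mean {Ω : Type*} {mΩ : MeasurableSpace Ω} {μ : Measure Ω}
    [IsProbabilityMeasure μ]
    (U : Ω → ℝ) (hU : Integrable U μ)
    (Y : Ω → ℝ) (hY : Measurable Y)
    (C : Ω → ℝ) (hC : Measurable C)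
    (hindep : IndepFun C (fun ω => (Y ω, U ω)) μ)
    (t : ℝ) :
    (∫ ω, (if t < min (Y ω) (C ω) then U ω else 0) ∂μ) * (μ {ω | t < Y ω}).toReal
        = (∫ ω, (if t < Y ω then U ω else 0) ∂μ) * (μ {ω | t < min (Y ω) (C ω)}).toReal
      ∧ (0 < μ {ω | t < Y ω} → 0 < μ {ω | t < C ω} →
          (∫ ω, (if t < min (Y ω) (C ω) then U ω else 0) ∂μ)
              / (μ {ω | t < min (Y ω) (C ω)}).toReal
            = (∫ ω, (if t < Y ω then U ω else 0) ∂μ) / (μ {ω | t < Y ω}).toReal) := by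
  -- f = indicator of {C > t}, g = U · 1{Y > t}
  set f : Ω → ℝ := fun ω => if t < C ω then 1 else 0 with hf
  set g : Ω → ℝ := fun ω => if t < Y ω then U ω else 0 with hg
  have hφ : Measurable fun c : ℝ => if t < c then (1 : ℝ) else 0 :=
    Measurable.ite measurableSet_Ioi measurable_const measurable_const
  have hψ : Measurable fun p : ℝ × ℝ => if t < p.1 then p.2 else 0 :=
    Measurable.ite (measurable_fst measurableSet_Ioi) measurable_snd measurable_const
  have hfg : IndepFun f g μ := hindep.comp hφ hψ
  have hsY : MeasurableSet {ω | t < Y ω} := measurableSet_lt measurable_const hY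
  have hsC : MeasurableSet {ω | t < C ω} := measurableSet_lt measurable_const hC
  have hg_ind : g = Set.indicator {ω | t < Y ω} U := by
    ext ω; simp [g, Set.indicator_apply, Set.mem_setOf_eq]
  have hg_int : Integrable g μ := hg_ind ▸ hU.indicator hsY
  have hfmeas : AEStronglyMeasurable f μ := (hφ.comp hC).aestronglyMeasurable
  -- product identity
  have key : ∫ ω, (if t < min (Y ω) (C ω) then U ω else 0) ∂μ
      = (∫ ω, f ω ∂μ) * ∫ ω, g ω ∂μ := by
    have := hfg.integral_mul_eq_mul_integral hfmeas hg_int.1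
    rw [← this]
    apply integral_congr_ae
    filter_upwards with ω
    simp only [Pi.mul_apply, f, g, lt_min_iff]
    by_cases h1 : t < Y ω <;> by_cases h2 : t < C ω <;> simp [h1, h2]
  have hEf : ∫ ω, f ω ∂μ = (μ {ω | t < C ω}).toReal := by
    have : f = Set.indicator {ω | t < C ω} (fun _ => (1 : ℝ)) := by
      ext ω; simp [f, Set.indicator_apply, Set.mem_setOf_eq]
    rw [this, integral_indicator_const _ hsC, smul_eq_mul, mul_one, measureReal_def]
  -- measure identity
  have hmeas : μ {ω | t < min (Y ω) (C ω)}
      = μ {ω | t < C ω} * μ {ω | t < Y ω} := by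
    have := hindep.measure_inter_preimage_eq_mul (Set.Ioi t)
      (Set.Ioi t ×ˢ Set.univ) measurableSet_Ioi (measurableSet_Ioi.prod .univ)
    have hset : C ⁻¹' Set.Ioi t ∩ (fun ω => (Y ω, U ω)) ⁻¹' (Set.Ioi t ×ˢ Set.univ)
        = {ω | t < min (Y ω) (C ω)} := by
      ext ω; simp [lt_min_iff, and_comm]
    have hset2 : (fun ω => (Y ω, U ω)) ⁻¹' (Set.Ioi t ×ˢ Set.univ) = {ω | t < Y ω} := by
      ext ω; simp
    rw [hset, hset2] at this
    exact this
  have hfin1 : μ {ω | t < Y ω} ≠ ⊤ := measure_ne_top _ _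
  have hfin2 : μ {ω | t < C ω} ≠ ⊤ := measure_ne_top _ _
  have hmulr : (μ {ω | t < min (Y ω) (C ω)}).toReal
      = (μ {ω | t < C ω}).toReal * (μ {ω | t < Y ω}).toReal := by
    rw [hmeas, ENNReal.toReal_mul]
  constructor
  · rw [key, hEf, hmulr]; ring
  · intro hY0 hC0
    have h1 : (μ {ω | t < Y ω}).toReal > 0 := ENNReal.toReal_pos hY0.ne' hfin1
    have h2 : (μ {ω | t < C ω}).toReal > 0 := ENNReal.toReal_pos hC0.ne' hfin2
    rw [key, hEf, hmulr]
    field_simp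
end

section
/- Let (Ω, F, μ) be a probability space, let U be an integrable real random variable, let Y, C : Ω → ℝ be measurable, and suppose C is independent of the pair (Y, U). Fix t ∈ ℝ, and let S_C(y) := μ(C > y). Assume that μ(C = y) = 0 for every y ∈ ℝ and that S_C(t) > 0. Then the inverse-probability-of-censoring weighted expectation recovers the complete-data expectation: E[ U · 1{Y ≤ C} · 1{Y ≤ t} / S_C(Y) ] = E[ U · 1{Y ≤ t} ]. -/
open MeasureTheory ProbabilityTheory

/-- The inverse-probability-of-censoring weighting identity behind the censoring-adjusted
estimators `μ̂*_{t1}`, `Σ̂*_{t1}` of Section 3 of the paper: under `C ⫫ (Y, U)`, a continuous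
censoring distribution, and `S_C(t) > 0`,
`E[U·1{Y ≤ C}·1{Y ≤ t}/S_C(Y)] = E[U·1{Y ≤ t}]`. -/
theorem ipcw_identity {Ω : Type*} {mΩ : MeasurableSpace Ω} {μ : Measure Ω}
    [IsProbabilityMeasure μ]
    (U : Ω → ℝ) (hU : Integrable U μ)
    (Y : Ω → ℝ) (hY : Measurable Y)
    (C : Ω → ℝ) (hC : Measurable C)
    (hindep : IndepFun C (fun ω => (Y ω, U ω)) μ)
    (t : ℝ)
    (S : ℝ → ℝ) (hS : ∀ y, S y = (μ {ω | y < C ω}).toReal)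
    (hcont : ∀ y : ℝ, μ {ω | C ω = y} = 0)
    (hSt : 0 < S t) :
    ∫ ω, (if Y ω ≤ C ω ∧ Y ω ≤ t then U ω / S (Y ω) else 0) ∂μ
      = ∫ ω, (if Y ω ≤ t then U ω else 0) ∂μ := by
  -- S is antitone
  have hSanti : Antitone S := by
    intro a b hab
    rw [hS a, hS b]
    exact ENNReal.toReal_mono (measure_ne_top μ _)
      (measure_mono (fun ω (h : b < C ω) => lt_of_le_of_lt hab h))
  have hSmeas : Measurable S := hSanti.measurable
  have hSpos : ∀ y, y ≤ t → 0 < S y := fun y hy => lt_of_lt_of_le hSt (hSanti hy)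
  -- measurability of the pair
  have hUm : AEMeasurable U μ := hU.1.aemeasurable
  have hWm : AEMeasurable (fun ω => (Y ω, U ω)) μ := hY.aemeasurable.prodMk hUm
  set ν : Measure ℝ := μ.map C with hν
  set ρ : Measure (ℝ × ℝ) := μ.map (fun ω => (Y ω, U ω)) with hρ
  have hνprob : IsProbabilityMeasure ν := Measure.isProbabilityMeasure_map hC.aemeasurable
  have hρprob : IsProbabilityMeasure ρ := Measure.isProbabilityMeasure_map hWm
  -- joint law is the product law
  have hmap : μ.map (fun ω => ((Y ω, U ω), C ω)) = ρ.prod ν :=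
    (indepFun_iff_map_prod_eq_prod_map_map hWm hC.aemeasurable).mp hindep.symm
  set G : (ℝ × ℝ) × ℝ → ℝ := fun p => if p.1.1 ≤ p.2 ∧ p.1.1 ≤ t then p.1.2 / S p.1.1 else 0
    with hG
  have hGmeas : Measurable G := by
    apply Measurable.ite
    · exact (measurableSet_le (measurable_fst.comp measurable_fst) measurable_snd).inter
        (measurableSet_le (measurable_fst.comp measurable_fst) measurable_const)
    · exact (measurable_snd.comp measurable_fst).div
        (hSmeas.comp (measurable_fst.comp measurable_fst))
    · exact measurable_const
  -- ν of an upper ray is S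
  have hray : ∀ y : ℝ, (ν {c | y ≤ c}).toReal = S y := by
    intro y
    have h1 : ν {c | y ≤ c} = μ {ω | y ≤ C ω} := by
      have hset : {c : ℝ | y ≤ c} = Set.Ici y := rfl
      rw [hν, hset, Measure.map_apply hC measurableSet_Ici]
      rfl
    have h2 : {ω | y ≤ C ω} = {ω | y < C ω} ∪ {ω | C ω = y} := by
      ext ω; simp only [Set.mem_setOf_eq, Set.mem_union]
      constructor
      · intro h; rcases lt_or_eq_of_le h with h | h
        · exact Or.inl h
        · exact Or.inr h.symm
      · rintro (h | h); exacts [le_of_lt h, le_of_eq h.symm]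
    have h3 : μ {ω | y ≤ C ω} = μ {ω | y < C ω} := by
      rw [h2]
      exact le_antisymm (le_trans (measure_union_le _ _) (by rw [hcont y, add_zero]))
        (measure_mono Set.subset_union_left)
    rw [h1, h3, hS y]
  -- integrability of G over the product
  have hint2 : Integrable (fun q : ℝ × ℝ => q.2) ρ := by
    rw [hρ, integrable_map_measure (measurable_snd.aestronglyMeasurable) hWm]
    exact hU
  have hdom : Integrable (fun p : (ℝ × ℝ) × ℝ => (|p.1.2| / S t) * (1 : ℝ)) (ρ.prod ν) :=
    (hint2.abs.div_const (S t)).mul_prod (integrable_const 1)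
  have hGint : Integrable G (ρ.prod ν) := by
    refine Integrable.mono' hdom hGmeas.aestronglyMeasurable ?_
    refine Filter.Eventually.of_forall fun p => ?_
    rw [hG]
    simp only [mul_one]
    by_cases h : p.1.1 ≤ p.2 ∧ p.1.1 ≤ t
    · rw [if_pos h]
      have hSp := hSpos _ h.2
      rw [Real.norm_eq_abs, abs_div, abs_of_pos hSp]
      exact div_le_div_of_nonneg_left (abs_nonneg _) hSt (hSanti h.2)
    · rw [if_neg h, norm_zero]
      positivity
  -- rewrite LHS as integral over the joint law, then over the product
  have hLHS : ∫ ω, (if Y ω ≤ C ω ∧ Y ω ≤ t then U ω / S (Y ω) else 0) ∂μ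
      = ∫ p, G p ∂(ρ.prod ν) := by
    rw [← hmap, integral_map (hWm.prodMk hC.aemeasurable) hGmeas.aestronglyMeasurable]
  rw [hLHS, MeasureTheory.integral_prod G hGint]
  -- compute the inner integral
  have hinner : ∀ q : ℝ × ℝ, (∫ c, G (q, c) ∂ν) = (if q.1 ≤ t then q.2 else 0) := by
    intro q
    by_cases hqt : q.1 ≤ t
    · rw [if_pos hqt]
      have : (fun c => G (q, c)) = fun c => Set.indicator (Set.Ici q.1)
          (fun _ => q.2 / S q.1) c := by
        funext c
        rw [hG]
        by_cases hc : q.1 ≤ c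
        · simp [hc, hqt, Set.indicator_of_mem, Set.mem_setOf_eq]
        · simp [hc, Set.indicator_of_notMem, Set.mem_setOf_eq]
      have hray' : (ν (Set.Ici q.1)).toReal = S q.1 := hray q.1
      rw [this, integral_indicator_const _ measurableSet_Ici, smul_eq_mul, mul_comm, measureReal_def, hray']
      field_simp [ne_of_gt (hSpos _ hqt)]
    · rw [if_neg hqt]
      have : (fun c => G (q, c)) = fun _ => (0 : ℝ) := by
        funext c; rw [hG]; simp [hqt]
      rw [this, integral_const, smul_zero]
  simp_rw [hinner]
  -- back to Ω
  rw [hρ]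
  exact integral_map hWm (Measurable.aestronglyMeasurable
    (Measurable.ite (measurableSet_le measurable_fst measurable_const) measurable_snd
      measurable_const))
end
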